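/- Counterexample showing the loss operator bound fails outside the restricted range: Let n ≥ 2, Φ(x) = |x|^{−n/2}, and g(x) = |x|^{−n/2} (ln|x|)^{−1} for |x| ≥ e and g(x) = 0 otherwise. Then g ∈ L²(ℝⁿ) and Φ belongs to weak-L²(ℝⁿ), yet for every v ∈ ℝⁿ the convolution integral diverges: ∫_{ℝⁿ} g(x) |v − x|^{−n/2} dx = +∞. -/

import Mathlib

open MeasureTheory Real Filter
open scoped ENNReal NNReal RealInnerProductSpace Topology Classical

noncomputable section

/-- `ℝⁿ` with `n = m + 2 ≥ 2`, as a Euclidean space. -/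
abbrev Euc (m : ℕ) := EuclideanSpace ℝ (Fin (m + 2))

/-- The surface measure on the unit sphere `S^{n-1} ⊆ ℝⁿ` (`n = m + 2`). -/
def sphMeasure (m : ℕ) : Measure (Metric.sphere (0 : Euc m) 1) :=
  (volume : Measure (Euc m)).toSphere

/-- `|S^k|`, the surface measure of the unit sphere in `ℝ^{k+1}`. -/
def sphArea (k : ℕ) : ℝ :=
  (((volume : Measure (EuclideanSpace ℝ (Fin (k + 1)))).toSphere) Set.univ).toReal

/-- `β(z) = (1 + e(z))/2`, where `e` is the restitution coefficient. -/
def betaF (e : ℝ → ℝ) (z : ℝ) : ℝ := (1 + e z) / 2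

/-- The unit vector `û` in the direction of `u` (junk value `0` for `u = 0`). -/
def uhat {m : ℕ} (u : Euc m) : Euc m := ‖u‖⁻¹ • u

/-- The impact velocity `|u| √((1 - û⬝ω)/2)`. -/
def impactVel {m : ℕ} (u ω : Euc m) : ℝ := ‖u‖ * Real.sqrt ((1 - ⟪uhat u, ω⟫) / 2)

/-- `u⁻ = (β/2)(u - |u|ω)`, with `β` evaluated at the impact velocity. -/
def uminus (e : ℝ → ℝ) {m : ℕ} (u ω : Euc m) : Euc m :=
  (betaF e (impactVel u ω) / 2) • (u - ‖u‖ • ω)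

/-- `u⁺ = u - u⁻`. -/
def uplusv (e : ℝ → ℝ) {m : ℕ} (u ω : Euc m) : Euc m := u - uminus e u ω

/-- The angular averaging operator `P(ψ, φ)(u) = ∫_{S^{n-1}} ψ(u⁻) φ(u⁺) b(û⬝ω) dω`. -/
def Pop (m : ℕ) (e b : ℝ → ℝ) (ψ φ : Euc m → ℝ) (u : Euc m) : ℝ :=
  ∫ ω : Metric.sphere (0 : Euc m) 1,
    ψ (uminus e u ω) * φ (uplusv e u ω) * b ⟪uhat u, (ω : Euc m)⟫ ∂(sphMeasure m)

/-- The weak form of the gain Boltzmann operator: with `u = v - v₊` and `v' = v - u⁻`,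
`∫∫∫ f(v) g(v₊) ψ(v') K(u) b(û⬝ω) dω dv₊ dv`, for a general radial kernel `K`
(`K u = |u|^λ` for variable hard/soft potentials). -/
def QplusWeak (m : ℕ) (e b : ℝ → ℝ) (K : Euc m → ℝ) (f g ψ : Euc m → ℝ) : ℝ :=
  ∫ v : Euc m, ∫ w : Euc m,
    f v * g w *
      ∫ ω : Metric.sphere (0 : Euc m) 1,
        ψ (v - uminus e (v - w) ω) *
          (K (v - w) * b ⟪uhat (v - w), (ω : Euc m)⟫) ∂(sphMeasure m)

/-- The density of the measure `dξ_n^b(s) = b(s) (1-s²)^{(n-3)/2} ds` on `[-1,1]`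
(here `n = m + 2`, so the exponent is `(m-1)/2`). -/
def xiDens (m : ℕ) (b : ℝ → ℝ) (s : ℝ) : ℝ := b s * (1 - s ^ 2) ^ (((m : ℝ) - 1) / 2)

/-- Integration of `F` against the measure `ξ_n^b` on `[-1,1]`. -/
def xiInt (m : ℕ) (b : ℝ → ℝ) (F : ℝ → ℝ) : ℝ :=
  ∫ s in (-1 : ℝ)..1, F s * xiDens m b s

/-- `toReal` of the reciprocal of an extended exponent: `1/p`, with `1/∞ = 0`. -/
def invT (p : ℝ≥0∞) : ℝ := (p⁻¹).toReal

/-- `toReal` of the Hölder conjugate exponent `p' = (1 - 1/p)⁻¹` (with `1' = ∞ ↦ 0`). -/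
def conjT (p : ℝ≥0∞) : ℝ := ((1 - p⁻¹)⁻¹ : ℝ≥0∞).toReal

/-- The weak-`L^s` (quasi-)norm `‖f‖_{weak-L^s} = sup_{t>0} t |{x : |f(x)| > t}|^{1/s}`. -/
def weakLpNorm {m : ℕ} (f : Euc m → ℝ) (s : ℝ≥0∞) : ℝ≥0∞ :=
  ⨆ t : ℝ≥0, (t : ℝ≥0∞) * (volume {x : Euc m | (t : ℝ) < |f x|}) ^ invT s

/-- The potential `Φ(x) = |x|^{-n/2}`. -/
def cePhi (m : ℕ) (x : Euc m) : ℝ := ‖x‖ ^ (-((m : ℝ) + 2) / 2)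

/-- The function `g(x) = |x|^{-n/2} (ln |x|)^{-1}` for `|x| ≥ e`, and `0` otherwise. -/
def ceG (m : ℕ) (x : Euc m) : ℝ :=
  if Real.exp 1 ≤ ‖x‖ then ‖x‖ ^ (-((m : ℝ) + 2) / 2) * (Real.log ‖x‖)⁻¹ else 0


open Set Metric in
lemma lintegral_fun_norm_aux (m : ℕ) (f : ℝ → ℝ≥0∞) (hf : Measurable f) :
    ∫⁻ x : Euc m, f ‖x‖ =
      ((volume : Measure (Euc m)).toSphere Set.univ) *
        ∫⁻ r in Set.Ioi (0:ℝ), ENNReal.ofReal (r ^ (m + 1)) * f r := by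
  have hdim : Module.finrank ℝ (Euc m) = m + 2 := finrank_euclideanSpace_fin
  set μ := (volume : Measure (Euc m))
  have h1 : ∫⁻ x : Euc m, f ‖x‖ ∂μ = ∫⁻ x : ({(0:Euc m)}ᶜ : Set (Euc m)), f ‖x.1‖ ∂(μ.comap Subtype.val) := by
    rw [lintegral_subtype_comap (measurableSet_singleton (0:Euc m)).compl (fun a => f ‖a‖),
      restrict_compl_singleton]
  have hmp := μ.measurePreserving_homeomorphUnitSphereProd
  have h2 : ∫⁻ x : ({(0:Euc m)}ᶜ : Set (Euc m)), f ‖x.1‖ ∂(μ.comap Subtype.val)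
      = ∫⁻ p : Metric.sphere (0 : Euc m) 1 × Set.Ioi (0:ℝ), f p.2.1
        ∂(μ.toSphere.prod (.volumeIoiPow (Module.finrank ℝ (Euc m) - 1))) := by
    rw [← hmp.lintegral_comp (f := fun p => f p.2.1) (by fun_prop)]
    exact lintegral_congr fun x => by
      rw [homeomorphUnitSphereProd_apply_snd_coe]
  have h3 : ∫⁻ p : Metric.sphere (0 : Euc m) 1 × Set.Ioi (0:ℝ), f p.2.1
        ∂(μ.toSphere.prod (.volumeIoiPow (Module.finrank ℝ (Euc m) - 1)))
      = μ.toSphere Set.univ * ∫⁻ r : Set.Ioi (0:ℝ), f r.1 ∂(Measure.volumeIoiPow (Module.finrank ℝ (Euc m) - 1)) := by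
    rw [lintegral_prod _ (by fun_prop)]
    simp [lintegral_const]
    ring
  have h4 : ∫⁻ r : Set.Ioi (0:ℝ), f r.1 ∂(Measure.volumeIoiPow (Module.finrank ℝ (Euc m) - 1))
      = ∫⁻ r in Set.Ioi (0:ℝ), ENNReal.ofReal (r ^ (m + 1)) * f r := by
    rw [Measure.volumeIoiPow, lintegral_withDensity_eq_lintegral_mul _ (by fun_prop) (by fun_prop)]
    simp only [Pi.mul_apply]
    rw [lintegral_subtype_comap measurableSet_Ioi
      (fun r => ENNReal.ofReal (r ^ (Module.finrank ℝ (Euc m) - 1)) * f r)]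
    simp [hdim]
  rw [h1, h2, h3, h4]

open Set Metric in
lemma integrableOn_aux (e : ℝ) (he : e = rexp 1) :
    IntegrableOn (fun r : ℝ => r⁻¹ * ((Real.log r)⁻¹) ^ 2) (Ici e) := by
  rw [integrableOn_Ici_iff_integrableOn_Ioi]
  have hepos : (0:ℝ) < e := he ▸ exp_pos 1
  apply integrableOn_Ioi_deriv_of_nonneg (g := fun r => -(Real.log r)⁻¹) (l := -0)
  · refine ContinuousAt.continuousWithinAt ?_
    refine ((Real.continuousAt_log hepos.ne').inv₀ ?_).neg
    rw [he, Real.log_exp]; norm_num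
  · intro x hx
    have hx0 : (0:ℝ) < x := lt_trans hepos hx
    have hlog : 1 < Real.log x := by
      rw [he] at hx
      exact (Real.lt_log_iff_exp_lt hx0).mpr hx
    have h1 := ((Real.hasDerivAt_log hx0.ne').inv (by linarith : Real.log x ≠ 0)).neg
    exact h1.congr_deriv (by rw [neg_div, neg_neg, div_eq_mul_inv, inv_pow])
  · intro x hx
    have hx0 : (0:ℝ) < x := lt_trans hepos hx
    positivity
  · exact (Real.tendsto_log_atTop.inv_tendsto_atTop).neg

open Set Metric in
lemma not_integrableOn_aux (R : ℝ) :
    ¬ IntegrableOn (fun x : ℝ => x⁻¹ * (Real.log x)⁻¹) (Ioi R) := by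
  have A : ∀ᶠ x in atTop, HasDerivAt (fun y => Real.log (Real.log y)) (x⁻¹ * (Real.log x)⁻¹) x := by
    filter_upwards [Ioi_mem_atTop (rexp 1)] with x hx
    have hx1 : (0:ℝ) < x := lt_trans (exp_pos 1) hx
    have hlog : 1 < Real.log x := (Real.lt_log_iff_exp_lt hx1).mpr hx
    have := (Real.hasDerivAt_log (by linarith : Real.log x ≠ 0)).comp x
      (Real.hasDerivAt_log hx1.ne')
    exact this.congr_deriv (by ring)
  have B : Tendsto (fun x => ‖Real.log (Real.log x)‖) atTop atTop :=
    tendsto_norm_atTop_atTop.comp (Real.tendsto_log_atTop.comp Real.tendsto_log_atTop)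
  exact not_integrableOn_of_tendsto_norm_atTop_of_deriv_isBigO_filter atTop (Ioi_mem_atTop R)
    (A.mono fun x hx => hx.differentiableAt) B
    (Filter.EventuallyEq.isBigO (A.mono fun x hx => hx.deriv))

open Set Metric in
lemma lintegral_aux_top {R : ℝ} (hR : rexp 1 ≤ R) :
    ∫⁻ r in Ioi R, ENNReal.ofReal (r⁻¹ * (Real.log r)⁻¹) = ∞ := by
  by_contra h
  apply not_integrableOn_aux R
  constructor
  · exact (measurable_inv.mul Real.measurable_log.inv).aestronglyMeasurable
  · rw [hasFiniteIntegral_iff_ofReal]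
    · exact lt_top_iff_ne_top.mpr h
    · refine (ae_restrict_iff' measurableSet_Ioi).mpr (ae_of_all _ fun a ha => ?_)
      have ha0 : (0:ℝ) < a := lt_of_lt_of_le (exp_pos 1) (le_of_lt (lt_of_le_of_lt hR ha))
      have hlog : 1 < Real.log a := (Real.lt_log_iff_exp_lt ha0).mpr (lt_of_le_of_lt hR ha)
      positivity

open Set Metric in
lemma part1 (m : ℕ) : MemLp (ceG m) 2 (volume : Measure (Euc m)) := by
  set a : ℝ := -((m : ℝ) + 2) / 2 with ha_def
  have hmeasG : Measurable (ceG m) := by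
    unfold ceG
    refine Measurable.ite (measurableSet_le measurable_const measurable_norm) ?_ measurable_const
    exact (by fun_prop : Measurable fun x : Euc m => ‖x‖ ^ a).mul
      (Real.measurable_log.comp measurable_norm).inv
  refine ⟨hmeasG.aestronglyMeasurable, ?_⟩
  rw [eLpNorm_eq_lintegral_rpow_enorm_toReal two_ne_zero ENNReal.ofNat_ne_top]
  refine ENNReal.rpow_lt_top_of_nonneg (by simp) (ne_of_lt ?_)
  set f : ℝ → ℝ≥0∞ := fun r =>
    ENNReal.ofReal ((if Real.exp 1 ≤ r then r ^ a * (Real.log r)⁻¹ else 0) ^ 2) with hf_def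
  have hfmeas : Measurable f := by
    refine ENNReal.measurable_ofReal.comp ?_
    refine Measurable.pow_const ?_ 2
    refine Measurable.ite (measurableSet_le measurable_const measurable_id) ?_ measurable_const
    exact (by fun_prop : Measurable fun r : ℝ => r ^ a).mul Real.measurable_log.inv
  have hrw : ∀ x : Euc m, (‖ceG m x‖₊ : ℝ≥0∞) ^ (2:ℝ≥0∞).toReal = f ‖x‖ := by
    intro x
    have hnn : 0 ≤ ceG m x := by
      unfold ceG
      split_ifs with h
      · have hx0 : (0:ℝ) < ‖x‖ := lt_of_lt_of_le (exp_pos 1) h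
        have hlog : 1 ≤ Real.log ‖x‖ := by
          rw [Real.le_log_iff_exp_le hx0]; simpa using h
        positivity
      · exact le_refl 0
    rw [← enorm_eq_nnnorm, Real.enorm_eq_ofReal hnn, ENNReal.toReal_ofNat,
      ENNReal.ofReal_rpow_of_nonneg hnn (by norm_num : (0:ℝ) ≤ 2)]
    have h2 : (ceG m x) ^ (2:ℝ) = (ceG m x) ^ 2 := by
      rw [show (2:ℝ) = ((2:ℕ):ℝ) by norm_num, Real.rpow_natCast]
    rw [h2, hf_def]
    rfl
  calc ∫⁻ x : Euc m, (‖ceG m x‖₊ : ℝ≥0∞) ^ (2:ℝ≥0∞).toReal ∂volume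
      = ∫⁻ x : Euc m, f ‖x‖ := lintegral_congr hrw
    _ = ((volume : Measure (Euc m)).toSphere Set.univ) *
        ∫⁻ r in Set.Ioi (0:ℝ), ENNReal.ofReal (r ^ (m + 1)) * f r :=
          lintegral_fun_norm_aux m f hfmeas
    _ < ∞ := by
        refine ENNReal.mul_lt_top (measure_lt_top _ _) ?_
        have hbound : ∀ r ∈ Ioi (0:ℝ), ENNReal.ofReal (r ^ (m + 1)) * f r ≤
            (Ici (rexp 1)).indicator (fun r => ENNReal.ofReal (r⁻¹ * ((Real.log r)⁻¹) ^ 2)) r := by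
          intro r hr
          have hr0 : (0:ℝ) < r := hr
          by_cases he : rexp 1 ≤ r
          · rw [indicator_of_mem (mem_Ici.mpr he), hf_def]
            simp only [if_pos he]
            rw [← ENNReal.ofReal_mul (by positivity)]
            apply ENNReal.ofReal_le_ofReal
            have hkey : r ^ (m + 1) * (r ^ a * (Real.log r)⁻¹) ^ 2 =
                r⁻¹ * ((Real.log r)⁻¹) ^ 2 := by
              have hra : r ^ (m+1) * (r ^ a * r ^ a) = r⁻¹ := by
                rw [← Real.rpow_natCast r (m+1), ← Real.rpow_add hr0, ← Real.rpow_add hr0]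
                have : ((m+1:ℕ):ℝ) + (a + a) = -1 := by push_cast; rw [ha_def]; ring
                rw [this, Real.rpow_neg_one]
              calc r ^ (m + 1) * (r ^ a * (Real.log r)⁻¹) ^ 2
                  = r ^ (m+1) * (r ^ a * r ^ a) * ((Real.log r)⁻¹) ^ 2 := by ring
                _ = r⁻¹ * ((Real.log r)⁻¹) ^ 2 := by rw [hra]
            rw [hkey]
          · rw [hf_def]
            simp [if_neg he]
        calc ∫⁻ r in Set.Ioi (0:ℝ), ENNReal.ofReal (r ^ (m + 1)) * f r
            ≤ ∫⁻ r in Set.Ioi (0:ℝ),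
              (Ici (rexp 1)).indicator (fun r => ENNReal.ofReal (r⁻¹ * ((Real.log r)⁻¹) ^ 2)) r :=
              setLIntegral_mono' measurableSet_Ioi hbound
          _ = ∫⁻ r in Ici (rexp 1) ∩ Ioi 0, ENNReal.ofReal (r⁻¹ * ((Real.log r)⁻¹) ^ 2) := by
              rw [lintegral_indicator measurableSet_Ici, Measure.restrict_restrict measurableSet_Ici]
          _ ≤ ∫⁻ r in Ici (rexp 1), ENNReal.ofReal (r⁻¹ * ((Real.log r)⁻¹) ^ 2) :=
              lintegral_mono_set inter_subset_left
          _ < ∞ := (integrableOn_aux (rexp 1) rfl).setLIntegral_lt_top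

open Set Metric in
lemma part2 (m : ℕ) : weakLpNorm (cePhi m) 2 < ∞ := by
  have ha : -((m : ℝ) + 2) / 2 < 0 := by
    have : (0:ℝ) < ((m:ℝ)+2)/2 := by positivity
    linarith
  set a : ℝ := -((m : ℝ) + 2) / 2 with ha_def
  set C := volume (Metric.ball (0 : Euc m) 1) with hC
  have hinv : invT 2 = (1/2 : ℝ) := by
    simp [invT]
  have hB : C ^ (1/2 : ℝ) < ∞ :=
    ENNReal.rpow_lt_top_of_nonneg (by norm_num) measure_ball_lt_top.ne
  refine lt_of_le_of_lt (iSup_le fun t => ?_) hB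
  rcases eq_or_lt_of_le (zero_le : (0:ℝ≥0) ≤ t) with h0 | htpos
  · simp [← h0]
  · have htpos' : (0:ℝ) < (t:ℝ) := htpos
    have hsub : {x : Euc m | (t : ℝ) < |cePhi m x|} ⊆ Metric.ball (0 : Euc m) ((t:ℝ) ^ a⁻¹) := by
      intro x hx
      simp only [mem_setOf_eq] at hx
      have habs : |cePhi m x| = ‖x‖ ^ a := abs_of_nonneg (Real.rpow_nonneg (norm_nonneg _) _)
      rw [habs] at hx
      have hxne : (0:ℝ) < ‖x‖ := by
        rcases (norm_nonneg x).lt_or_eq with h | h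
        · exact h
        · exfalso
          rw [← h, Real.zero_rpow (ne_of_lt ha)] at hx
          linarith
      rw [mem_ball_zero_iff]
      exact (Real.lt_rpow_inv_iff_of_neg hxne htpos' ha).mpr hx
    have hballmeas : volume (Metric.ball (0 : Euc m) ((t:ℝ) ^ a⁻¹)) =
        ENNReal.ofReal (((t:ℝ) ^ a⁻¹) ^ (m + 2)) * C := by
      rw [(volume : Measure (Euc m)).addHaar_ball (0:Euc m) (Real.rpow_nonneg (le_of_lt htpos') _),
        finrank_euclideanSpace_fin, hC]
    have hpow : ((t:ℝ) ^ a⁻¹) ^ (m + 2) = (t:ℝ) ^ (-2 : ℝ) := by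
      rw [← Real.rpow_natCast ((t:ℝ) ^ a⁻¹) (m+2), ← Real.rpow_mul (le_of_lt htpos')]
      congr 1
      push_cast
      have hane : a ≠ 0 := ne_of_lt ha
      have h2 : ((m:ℝ) + 2 : ℝ) = a * (-2) := by rw [ha_def]; ring
      rw [h2, ← mul_assoc, inv_mul_cancel₀ hane, one_mul]
    calc (t : ℝ≥0∞) * (volume {x : Euc m | (t : ℝ) < |cePhi m x|}) ^ invT 2
        ≤ (t : ℝ≥0∞) * (ENNReal.ofReal ((t:ℝ) ^ (-2:ℝ)) * C) ^ (1/2:ℝ) := by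
          rw [hinv]
          gcongr
          rw [← hpow, ← hballmeas]
          exact measure_mono hsub
      _ = ((t : ℝ≥0∞) * ENNReal.ofReal ((t:ℝ)⁻¹)) * C ^ (1/2:ℝ) := by
          rw [ENNReal.mul_rpow_of_nonneg _ _ (by norm_num),
            ENNReal.ofReal_rpow_of_pos (Real.rpow_pos_of_pos htpos' _)]
          have hh : ((t:ℝ) ^ (-2:ℝ)) ^ ((1:ℝ)/2) = (t:ℝ)⁻¹ := by
            rw [← Real.rpow_mul (le_of_lt htpos')]
            norm_num [Real.rpow_neg_one]
          rw [hh, mul_assoc]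
      _ = C ^ (1/2:ℝ) := by
          rw [← ENNReal.ofReal_coe_nnreal, ← ENNReal.ofReal_mul (le_of_lt htpos'),
            mul_inv_cancel₀ (ne_of_gt htpos')]
          simp
      _ ≤ C ^ (1/2:ℝ) := le_refl _

open Set Metric in
lemma part3 (m : ℕ) (v : Euc m) :
    (∫⁻ x : Euc m, ENNReal.ofReal (ceG m x * ‖v - x‖ ^ (-((m : ℝ) + 2) / 2))) = ∞ := by
  set a : ℝ := -((m : ℝ) + 2) / 2 with ha_def
  have ha : a < 0 := by
    have : (0:ℝ) < ((m:ℝ)+2)/2 := by positivity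
    rw [ha_def]; linarith
  set R : ℝ := rexp 1 + ‖v‖ with hR_def
  have hRe : rexp 1 ≤ R := by rw [hR_def]; linarith [norm_nonneg v]
  have hR0 : (0:ℝ) < R := lt_of_lt_of_le (exp_pos 1) hRe
  set f : ℝ → ℝ≥0∞ := fun r =>
    if R ≤ r then ENNReal.ofReal (r ^ a * (Real.log r)⁻¹ * (2*r) ^ a) else 0 with hf_def
  have hfmeas : Measurable f := by
    refine Measurable.ite (measurableSet_le measurable_const measurable_id) ?_ measurable_const
    refine ENNReal.measurable_ofReal.comp ?_
    exact ((by fun_prop : Measurable fun r : ℝ => r ^ a).mul Real.measurable_log.inv).mul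
      (by fun_prop : Measurable fun r : ℝ => (2*r) ^ a)
  -- pointwise lower bound
  have hlb : ∀ x : Euc m, f ‖x‖ ≤ ENNReal.ofReal (ceG m x * ‖v - x‖ ^ a) := by
    intro x
    rw [hf_def]
    by_cases hx : R ≤ ‖x‖
    · simp only [if_pos hx]
      have hxe : rexp 1 ≤ ‖x‖ := le_trans hRe hx
      have hx0 : (0:ℝ) < ‖x‖ := lt_of_lt_of_le (exp_pos 1) hxe
      have hv : ‖v‖ ≤ ‖x‖ := by
        have := exp_pos 1
        rw [hR_def] at hx; linarith
      have hvx_pos : (0:ℝ) < ‖v - x‖ := by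
        have h1 : ‖v - x‖ = ‖x - v‖ := norm_sub_rev v x
        have h2 : ‖x‖ - ‖v‖ ≤ ‖x - v‖ := norm_sub_norm_le x v
        have := exp_pos 1
        rw [hR_def] at hx
        rw [h1]; linarith
      have hvx_le : ‖v - x‖ ≤ 2 * ‖x‖ := by
        calc ‖v - x‖ ≤ ‖v‖ + ‖x‖ := norm_sub_le v x
          _ ≤ 2 * ‖x‖ := by linarith
      have hkey : (2 * ‖x‖) ^ a ≤ ‖v - x‖ ^ a :=
        Real.rpow_le_rpow_of_nonpos hvx_pos hvx_le (le_of_lt ha)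
      have hnn : 0 ≤ ‖x‖ ^ a * (Real.log ‖x‖)⁻¹ := by
        have hlog : 1 ≤ Real.log ‖x‖ := by
          rw [Real.le_log_iff_exp_le hx0]; simpa using hxe
        positivity
      apply ENNReal.ofReal_le_ofReal
      have hceG : ceG m x = ‖x‖ ^ a * (Real.log ‖x‖)⁻¹ := by
        unfold ceG; rw [if_pos hxe]
      rw [hceG]
      exact mul_le_mul_of_nonneg_left hkey hnn
    · simp only [if_neg hx]
      exact zero_le
  -- the radial integral diverges
  have hdiv : ∫⁻ r in Ioi (0:ℝ), ENNReal.ofReal (r ^ (m + 1)) * f r = ∞ := by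
    rw [eq_top_iff]
    calc (∞ : ℝ≥0∞) = ENNReal.ofReal ((2:ℝ) ^ a) *
          ∫⁻ r in Ioi R, ENNReal.ofReal (r⁻¹ * (Real.log r)⁻¹) := by
          rw [lintegral_aux_top hRe, ENNReal.mul_top]
          simp only [ne_eq, ENNReal.ofReal_eq_zero, not_le]
          exact Real.rpow_pos_of_pos two_pos a
      _ = ∫⁻ r in Ioi R, ENNReal.ofReal ((2:ℝ)^a) * ENNReal.ofReal (r⁻¹ * (Real.log r)⁻¹) := by
          rw [lintegral_const_mul' _ _ ENNReal.ofReal_ne_top]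
      _ = ∫⁻ r in Ioi R, ENNReal.ofReal (r ^ (m + 1)) * f r := by
          refine setLIntegral_congr_fun measurableSet_Ioi (fun r hr => ?_)
          have hrR : R ≤ r := le_of_lt hr
          have hr0 : (0:ℝ) < r := lt_trans hR0 hr
          rw [hf_def]
          simp only [if_pos hrR]
          rw [← ENNReal.ofReal_mul (by positivity), ← ENNReal.ofReal_mul (by positivity)]
          congr 1
          have hmul : (2*r) ^ a = 2 ^ a * r ^ a :=
            Real.mul_rpow (by norm_num) (le_of_lt hr0)
          have hra : r ^ (m+1) * (r ^ a * r ^ a) = r⁻¹ := by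
            rw [← Real.rpow_natCast r (m+1), ← Real.rpow_add hr0, ← Real.rpow_add hr0]
            have : ((m+1:ℕ):ℝ) + (a + a) = -1 := by push_cast; rw [ha_def]; ring
            rw [this, Real.rpow_neg_one]
          calc (2:ℝ)^a * (r⁻¹ * (Real.log r)⁻¹)
              = (2:ℝ)^a * ((r ^ (m+1) * (r ^ a * r ^ a)) * (Real.log r)⁻¹) := by rw [hra]
            _ = r ^ (m+1) * (r ^ a * (Real.log r)⁻¹ * (2^a * r^a)) := by ring
            _ = r ^ (m+1) * (r ^ a * (Real.log r)⁻¹ * (2*r)^a) := by rw [hmul]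
      _ ≤ ∫⁻ r in Ioi (0:ℝ), ENNReal.ofReal (r ^ (m + 1)) * f r :=
          lintegral_mono_set (Ioi_subset_Ioi (le_of_lt hR0))
  -- conclude
  have hS : ((volume : Measure (Euc m)).toSphere Set.univ) ≠ 0 := by
    rw [Measure.toSphere_apply_univ]
    refine mul_ne_zero ?_ ?_
    · simp [finrank_euclideanSpace_fin]
    · exact (measure_ball_pos volume (0 : Euc m) one_pos).ne'
  rw [eq_top_iff]
  calc (∞:ℝ≥0∞) = ((volume : Measure (Euc m)).toSphere Set.univ) *
        ∫⁻ r in Ioi (0:ℝ), ENNReal.ofReal (r ^ (m + 1)) * f r := by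
        rw [hdiv, ENNReal.mul_top hS]
    _ = ∫⁻ x : Euc m, f ‖x‖ := (lintegral_fun_norm_aux m f hfmeas).symm
    _ ≤ _ := lintegral_mono hlb

/-- **Counterexample showing the loss operator bound fails outside the restricted
range**: with `Φ(x) = |x|^{-n/2}` and `g` as above, `g ∈ L²(ℝⁿ)` and `Φ` belongs to
weak-`L²(ℝⁿ)`, yet for every `v ∈ ℝⁿ` the convolution integral diverges:
`∫ g(x) |v-x|^{-n/2} dx = +∞`. -/
theorem loss_counterexample (m : ℕ) :
    MemLp (ceG m) 2 (volume : Measure (Euc m)) ∧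
    weakLpNorm (cePhi m) 2 < ∞ ∧
    ∀ v : Euc m,
      (∫⁻ x : Euc m, ENNReal.ofReal (ceG m x * ‖v - x‖ ^ (-((m : ℝ) + 2) / 2))) = ∞ := by
  exact ⟨part1 m, part2 m, fun v => part3 m v⟩

end
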